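/- Let G be a finite connected vertex-transitive graph and let μ be a simple eigenvalue of its normalized adjacency matrix D^{-1}A with eigenfunction f. Then |f| is a constant function; in particular, if f is normalized so that f(a) ∈ {−1, 1} for some vertex a, then f(u) ∈ {−1, 1} for all vertices u. -/
import Mathlib

open Finset Polynomial

noncomputable section
open scoped Classical

/-- The normalized adjacency matrix `D⁻¹A` of a finite graph. -/
def normAdj {V : Type*} [Fintype V] (G : SimpleGraph V) : Matrix V V ℝ :=
  Matrix.of fun u v => if G.Adj u v then ((G.degree u : ℝ))⁻¹ else 0

/-- A graph is vertex-transitive if its automorphism group acts transitively on vertices. -/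
def VertexTransitive {V : Type*} (G : SimpleGraph V) : Prop :=
  ∀ u v : V, ∃ φ : G ≃g G, φ u = v

/-- For a finite connected vertex-transitive graph, if `μ` is a simple eigenvalue
(one-dimensional eigenspace) of the normalized adjacency matrix with eigenfunction `f`,
then `|f|` is constant; in particular, if `f a ∈ {-1, 1}` for some vertex `a`, then
`f u ∈ {-1, 1}` for every vertex `u`. -/
theorem abs_eigenfunction_const {V : Type*} [Fintype V] (G : SimpleGraph V)
    (hconn : G.Connected) (hvt : VertexTransitive G) (μ : ℝ)
    (hsimple : Module.finrank ℝ
      (Module.End.eigenspace (Matrix.mulVecLin (normAdj G)) μ) = 1)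
    (f : V → ℝ) (hf : f ≠ 0) (hfe : (normAdj G).mulVec f = μ • f) :
    (∀ u v : V, |f u| = |f v|) ∧
      ((∃ a : V, f a = -1 ∨ f a = 1) → ∀ u : V, f u = -1 ∨ f u = 1) := by
  have key : ∀ u v : V, |f u| = |f v| := by
    intro u v
    obtain ⟨φ, hφ⟩ := hvt u v
    set g : V → ℝ := fun x => f (φ x) with hg
    have hdeg : ∀ x : V, G.degree (φ x) = G.degree x := by
      intro x
      rw [← SimpleGraph.card_neighborSet_eq_degree, ← SimpleGraph.card_neighborSet_eq_degree]
      exact (Fintype.card_congr (φ.mapNeighborSet x)).symm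
    have hmat : ∀ x y : V, normAdj G (φ x) (φ y) = normAdj G x y := by
      intro x y
      simp only [normAdj, Matrix.of_apply, φ.map_adj_iff, hdeg]
    have hge : (normAdj G).mulVec g = μ • g := by
      funext x
      have h1 := congrFun hfe (φ x)
      simp only [Matrix.mulVec, dotProduct, Pi.smul_apply, smul_eq_mul] at h1 ⊢
      calc ∑ y, normAdj G x y * g y
          = ∑ y, normAdj G (φ x) (φ y) * f (φ y) := by
            simp only [hmat, hg]
        _ = ∑ z, normAdj G (φ x) z * f z := Fintype.sum_equiv φ.toEquiv _ _ (fun y => rfl)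
        _ = μ * f (φ x) := h1
    have hfmem : f ∈ Module.End.eigenspace (Matrix.mulVecLin (normAdj G)) μ := by
      rw [Module.End.mem_eigenspace_iff, Matrix.mulVecLin_apply, hfe]
    have hgmem : g ∈ Module.End.eigenspace (Matrix.mulVecLin (normAdj G)) μ := by
      rw [Module.End.mem_eigenspace_iff, Matrix.mulVecLin_apply, hge]
    have hfne : (⟨f, hfmem⟩ : Module.End.eigenspace (Matrix.mulVecLin (normAdj G)) μ) ≠ 0 := by
      intro h
      exact hf (congrArg Subtype.val h)
    obtain ⟨c, hc⟩ := (finrank_eq_one_iff_of_nonzero' _ hfne).mp hsimple ⟨g, hgmem⟩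
    have hcg : g = c • f := (congrArg Subtype.val hc).symm
    -- sum of squares argument
    have hsum : ∑ x, g x ^ 2 = ∑ x, f x ^ 2 := Fintype.sum_equiv φ.toEquiv _ _ (fun x => rfl)
    have hsum2 : ∑ x, g x ^ 2 = c ^ 2 * ∑ x, f x ^ 2 := by
      rw [hcg, Finset.mul_sum]
      simp [mul_pow]
    have hpos : 0 < ∑ x, f x ^ 2 := by
      obtain ⟨x, hx⟩ : ∃ x, f x ≠ 0 := by
        by_contra h
        push_neg at h
        exact hf (funext h)
      have : 0 < f x ^ 2 := by positivity
      exact Finset.sum_pos' (fun i _ => sq_nonneg _) ⟨x, Finset.mem_univ x, this⟩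
    have hc2 : c ^ 2 = 1 := by
      have := hsum2.symm.trans hsum
      field_simp at this
      nlinarith
    have habs : |c| = 1 := by
      rw [← sq_abs] at hc2
      nlinarith [abs_nonneg c]
    have : f v = c * f u := by
      have := congrFun hcg u
      simp only [Pi.smul_apply, smul_eq_mul, hg] at this
      rw [hφ] at this
      exact this
    rw [this, abs_mul, habs, one_mul]
  refine ⟨key, ?_⟩
  rintro ⟨a, ha⟩ u
  have h1 : |f a| = 1 := by rcases ha with h | h <;> simp [h]
  have := (key u a).trans h1
  rcases (abs_eq (by norm_num : (0:ℝ) ≤ 1)).mp this with h | h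
  · exact Or.inr h
  · exact Or.inl h
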